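/- For 0 < q < 1 and a nonnegative integer m, the limit lim_{s→−m} ζ_q(s) exists and equals (1-q)^{-m} [ ∑_{r=0}^m (-1)^r C(m,r)/(q^{m+1-r}−1) + (−1)^{m+1}/((m+1) log q) ]. -/

import Mathlib

open Filter Complex Topology Polynomial

namespace StmtAux4


/-- The `r`-th term of the series. -/
noncomputable def term (q : ℝ) (s : ℂ) (r : ℕ) : ℂ :=
  ((ascPochhammer ℂ r).eval s / (r.factorial : ℂ)) *
    ((q : ℂ) ^ (s + (r : ℂ) - 1) / (1 - (q : ℂ) ^ (s + (r : ℂ) - 1)))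

lemma asc_norm_le (r : ℕ) (s : ℂ) (x : ℝ) (hx : 0 < x) (h : ‖s‖ ≤ x) :
    ‖(ascPochhammer ℂ r).eval s‖ ≤ (ascPochhammer ℝ r).eval x := by
  induction r with
  | zero => simp
  | succ n ih =>
    rw [ascPochhammer_succ_eval, ascPochhammer_succ_eval, norm_mul]
    have h1 : ‖s + (n : ℂ)‖ ≤ x + n := by
      refine (norm_add_le _ _).trans ?_
      simp only [Complex.norm_natCast]
      linarith
    exact mul_le_mul ih h1 (norm_nonneg _) (ascPochhammer_pos n x hx).le

/-- Dominating bound for the terms. -/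
noncomputable def bnd (q : ℝ) (m : ℕ) (r : ℕ) : ℝ :=
  (q ^ (-(m : ℝ) - 3/2) / (1 - q ^ (1/2 : ℝ))) *
    ((ascPochhammer ℝ r).eval ((m : ℝ) + 1) / r.factorial * q ^ r)

lemma summable_bnd {q : ℝ} (hq0 : 0 < q) (hq1 : q < 1) (m : ℕ) : Summable (bnd q m) := by
  apply Summable.mul_left
  have hpos : ∀ r : ℕ, 0 < (ascPochhammer ℝ r).eval ((m : ℝ) + 1) / r.factorial * q ^ r := by
    intro r
    have h1 : (0:ℝ) < (ascPochhammer ℝ r).eval ((m : ℝ) + 1) :=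
      ascPochhammer_pos r _ (by positivity)
    positivity
  refine summable_of_ratio_test_tendsto_lt_one hq1
    (Eventually.of_forall fun r => (hpos r).ne') ?_
  have key : ∀ r : ℕ, ‖(ascPochhammer ℝ (r+1)).eval ((m : ℝ) + 1) / (r+1).factorial * q ^ (r+1)‖ /
      ‖(ascPochhammer ℝ r).eval ((m : ℝ) + 1) / r.factorial * q ^ r‖
      = (1 + (m : ℝ) + (r : ℝ)) / ((r : ℝ) + 1) * q := by
    intro r
    have h1 : (0:ℝ) < (ascPochhammer ℝ r).eval ((m : ℝ) + 1) :=
      ascPochhammer_pos r _ (by positivity)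
    rw [Real.norm_of_nonneg (hpos (r+1)).le, Real.norm_of_nonneg (hpos r).le,
      ascPochhammer_succ_eval, Nat.factorial_succ]
    have hr : ((r:ℝ)+1) ≠ 0 := by positivity
    have hf : ((r.factorial : ℝ)) ≠ 0 := by positivity
    have hqr : (q:ℝ) ^ r ≠ 0 := by positivity
    push_cast
    field_simp
    ring
  simp only [key]
  have h0 : Tendsto (fun r : ℕ => (1 + (m : ℝ) + (r : ℝ)) / ((r : ℝ) + 1)) atTop (𝓝 1) := by
    have h1 : Tendsto (fun r : ℕ => 1 + (m : ℝ) * (1 / ((r : ℝ) + 1))) atTop (𝓝 (1 + (m:ℝ) * 0)) :=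
      tendsto_const_nhds.add (tendsto_const_nhds.mul tendsto_one_div_add_atTop_nhds_zero_nat)
    rw [mul_zero, add_zero] at h1
    refine h1.congr fun r => ?_
    have hr : ((r:ℝ)+1) ≠ 0 := by positivity
    field_simp
    ring
  have := h0.mul (tendsto_const_nhds (x := q))
  rwa [one_mul] at this




lemma term_norm_le {q : ℝ} (hq0 : 0 < q) (hq1 : q < 1) (m r : ℕ) (hr : m + 2 ≤ r)
    (s : ℂ) (hs : ‖s + m‖ ≤ 1/2) : ‖term q s r‖ ≤ bnd q m r := by
  have hq12 : q ^ (1/2 : ℝ) < 1 := Real.rpow_lt_one hq0.le hq1 (by norm_num)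
  have hq12' : (0:ℝ) < 1 - q ^ (1/2 : ℝ) := by linarith
  have hsre : -(m : ℝ) - 1/2 ≤ s.re := by
    have h1 : |s.re + m| ≤ 1/2 := by
      have := Complex.abs_re_le_norm (s + m)
      simp only [Complex.add_re, Complex.natCast_re] at this
      exact this.trans hs
    have := abs_le.1 h1
    linarith [this.1]
  have hA : ‖(q:ℂ) ^ (s + (r : ℂ) - 1)‖ = q ^ (s.re + r - 1) := by
    rw [Complex.norm_cpow_eq_rpow_re_of_pos hq0]
    norm_num
  have hrge : (m : ℝ) + 2 ≤ (r : ℝ) := by exact_mod_cast hr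
  have hexp : (1/2 : ℝ) ≤ s.re + r - 1 := by linarith
  have hA2 : ‖(q:ℂ) ^ (s + (r : ℂ) - 1)‖ ≤ q ^ (1/2 : ℝ) := by
    rw [hA]; exact Real.rpow_le_rpow_of_exponent_ge hq0 hq1.le hexp
  have hden : 1 - q ^ (1/2 : ℝ) ≤ ‖1 - (q:ℂ) ^ (s + (r : ℂ) - 1)‖ := by
    have h1 : ‖(1:ℂ)‖ - ‖(q:ℂ) ^ (s + (r : ℂ) - 1)‖ ≤ ‖1 - (q:ℂ) ^ (s + (r : ℂ) - 1)‖ :=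
      norm_sub_norm_le _ _
    rw [norm_one] at h1
    linarith
  have hAle : ‖(q:ℂ) ^ (s + (r : ℂ) - 1)‖ ≤ q ^ (-(m : ℝ) - 3/2) * q ^ r := by
    rw [hA]
    have h1 : q ^ (s.re + r - 1) ≤ q ^ ((r : ℝ) - m - 3/2) :=
      Real.rpow_le_rpow_of_exponent_ge hq0 hq1.le (by linarith)
    have h2 : q ^ ((r : ℝ) - m - 3/2) = q ^ (-(m : ℝ) - 3/2) * q ^ r := by
      rw [← Real.rpow_natCast q r, ← Real.rpow_add hq0]
      ring_nf
    linarith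
  have hP : ‖(ascPochhammer ℂ r).eval s‖ ≤ (ascPochhammer ℝ r).eval ((m : ℝ) + 1) := by
    refine asc_norm_le r s _ (by positivity) ?_
    have h1 : ‖s‖ ≤ ‖s + m‖ + ‖(m:ℂ)‖ := by
      simpa using norm_add_le (s + m) (-(m:ℂ))
    simp only [Complex.norm_natCast] at h1
    linarith
  have hnorm : ‖term q s r‖ =
      ‖(ascPochhammer ℂ r).eval s‖ / r.factorial *
        (‖(q:ℂ) ^ (s + (r : ℂ) - 1)‖ / ‖1 - (q:ℂ) ^ (s + (r : ℂ) - 1)‖) := by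
    simp [term, norm_mul, norm_div]
  rw [hnorm, bnd]
  have hfac : (0:ℝ) < r.factorial := by positivity
  have h1 : ‖(ascPochhammer ℂ r).eval s‖ / r.factorial ≤
      (ascPochhammer ℝ r).eval ((m : ℝ) + 1) / r.factorial :=
    by gcongr
  have h2 : ‖(q:ℂ) ^ (s + (r : ℂ) - 1)‖ / ‖1 - (q:ℂ) ^ (s + (r : ℂ) - 1)‖ ≤
      (q ^ (-(m : ℝ) - 3/2) * q ^ r) / (1 - q ^ (1/2 : ℝ)) :=
    div_le_div₀ (by positivity) hAle hq12' hden
  calc ‖(ascPochhammer ℂ r).eval s‖ / r.factorial *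
        (‖(q:ℂ) ^ (s + (r : ℂ) - 1)‖ / ‖1 - (q:ℂ) ^ (s + (r : ℂ) - 1)‖)
      ≤ ((ascPochhammer ℝ r).eval ((m : ℝ) + 1) / r.factorial) *
        ((q ^ (-(m : ℝ) - 3/2) * q ^ r) / (1 - q ^ (1/2 : ℝ))) := by
        refine mul_le_mul h1 h2 (by positivity) (div_nonneg (ascPochhammer_pos _ _ (by positivity)).le (by positivity))
    _ = q ^ (-(m : ℝ) - 3/2) / (1 - q ^ (1/2 : ℝ)) *
        ((ascPochhammer ℝ r).eval ((m : ℝ) + 1) / r.factorial * q ^ r) := by ring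




lemma poch_neg (m r : ℕ) :
    (ascPochhammer ℂ r).eval (-(m : ℂ)) = (-1) ^ r * (r.factorial : ℂ) * (m.choose r : ℂ) := by
  have h : -(m : ℂ) = -((m : ℕ) : ℂ) := by norm_cast
  rw [h, ascPochhammer_eval_neg_eq_descPochhammer, descPochhammer_eval_eq_descFactorial,
    Nat.descFactorial_eq_factorial_mul_choose]
  push_cast
  ring

lemma denom_ne_zero {q : ℝ} (hq0 : 0 < q) (hq1 : q < 1) (n : ℤ) (hn : n ≠ 0) :
    1 - (q : ℂ) ^ n ≠ 0 := by
  have h1 : ((q : ℂ)) ^ n = ((q ^ n : ℝ) : ℂ) := by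
    rw [Complex.ofReal_zpow]
  rw [h1, sub_ne_zero]
  intro h
  have h2 : (q : ℝ) ^ n = 1 := by exact_mod_cast h.symm
  have h3 : (q : ℝ) ^ n = q ^ (0 : ℤ) := by rw [zpow_zero]; exact h2
  exact hn (zpow_right_injective₀ hq0 hq1.ne h3)

lemma term_contAt {q : ℝ} (hq0 : 0 < q) (hq1 : q < 1) (m r : ℕ) (hr : r ≠ m + 1) :
    ContinuousAt (fun s => term q s r) (-(m : ℂ)) := by
  have hc0 : (q : ℂ) ≠ 0 := by exact_mod_cast hq0.ne'
  have hA : ContinuousAt (fun s : ℂ => (q : ℂ) ^ (s + (r : ℂ) - 1)) (-(m : ℂ)) := by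
    exact (continuousAt_const_cpow hc0).comp (by fun_prop)
  have hexp : -(m : ℂ) + (r : ℂ) - 1 = (((r : ℤ) - m - 1 : ℤ) : ℂ) := by push_cast; ring
  have hden : 1 - (q : ℂ) ^ (-(m : ℂ) + (r : ℂ) - 1) ≠ 0 := by
    rw [hexp, Complex.cpow_intCast]
    exact denom_ne_zero hq0 hq1 _ (by omega)
  exact (((Polynomial.continuous _).continuousAt).div_const _).mul
    (hA.div (continuousAt_const.sub hA) hden)

lemma term_at_le {q : ℝ} (hq0 : 0 < q) (hq1 : q < 1) {m r : ℕ} (hr : r ≤ m) :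
    term q (-(m : ℂ)) r = (-1) ^ r * (m.choose r : ℂ) / ((q : ℂ) ^ (m + 1 - r) - 1) := by
  have hc0 : (q : ℂ) ≠ 0 := by exact_mod_cast hq0.ne'
  set k : ℕ := m + 1 - r with hk
  have hk1 : 1 ≤ k := by omega
  have hkc : (k : ℂ) = (m : ℂ) + 1 - r := by
    have : (k : ℕ) + r = m + 1 := by omega
    have := congrArg (Nat.cast : ℕ → ℂ) this
    push_cast at this
    linear_combination this
  have hexp : -(m : ℂ) + (r : ℂ) - 1 = -(k : ℂ) := by rw [hkc]; ring
  have hck : (q : ℂ) ^ (-(m : ℂ) + (r : ℂ) - 1) = ((q : ℂ) ^ k)⁻¹ := by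
    rw [hexp, Complex.cpow_neg, Complex.cpow_natCast]
  have hqk0 : (q : ℂ) ^ k ≠ 0 := pow_ne_zero _ hc0
  have hqk1 : (q : ℂ) ^ k ≠ 1 := by
    intro h
    have : (q : ℝ) ^ k = 1 := by exact_mod_cast h
    have hlt : (q : ℝ) ^ k < 1 := pow_lt_one₀ hq0.le hq1 (by omega)
    linarith
  have hfrac : ((q : ℂ) ^ k)⁻¹ / (1 - ((q : ℂ) ^ k)⁻¹) = 1 / ((q : ℂ) ^ k - 1) := by
    have h2 : (q : ℂ) ^ k - 1 ≠ 0 := sub_ne_zero.2 hqk1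
    have h3 : 1 - ((q : ℂ) ^ k)⁻¹ ≠ 0 := by
      rw [sub_ne_zero]
      intro h
      exact hqk1 (by rw [← inv_inv ((q:ℂ)^k), ← h, inv_one])
    field_simp
  rw [term, poch_neg, hck, hfrac, mul_one_div]
  have hfac : (r.factorial : ℂ) ≠ 0 := by exact_mod_cast r.factorial_ne_zero
  congr 1
  field_simp

lemma term_at_gt {q : ℝ} {m r : ℕ} (hr : m + 2 ≤ r) : term q (-(m : ℂ)) r = 0 := by
  have h : (ascPochhammer ℂ r).eval (-(m : ℂ)) = 0 := by
    have := ascPochhammer_eval_neg_coe_nat_of_lt (R := ℂ) (n := r) (k := m) (by omega)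
    exact this
  simp [term, h]




lemma tendsto_term_sing {q : ℝ} (hq0 : 0 < q) (hq1 : q < 1) (m : ℕ) :
    Tendsto (fun s => term q s (m + 1)) (𝓝[≠] (-(m : ℂ)))
      (𝓝 ((-1 : ℂ) ^ (m + 1) / (((m : ℂ) + 1) * (Real.log q : ℂ)))) := by
  have hc0 : (q : ℂ) ≠ 0 := by exact_mod_cast hq0.ne'
  have hlogq : Real.log q < 0 := Real.log_neg hq0 hq1
  have hlog : (Real.log q : ℂ) ≠ 0 := by exact_mod_cast hlogq.ne
  have hlogc : Complex.log (q : ℂ) = (Real.log q : ℂ) := (Complex.ofReal_log hq0.le).symm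
  -- derivative fact
  have hd : HasDerivAt (fun w : ℂ => 1 - (q : ℂ) ^ w) (-(Real.log q : ℂ)) 0 := by
    have h1 : HasDerivAt (fun w : ℂ => Complex.log (q : ℂ) * w) (Complex.log (q : ℂ)) 0 := by
      simpa using (hasDerivAt_id (0 : ℂ)).const_mul (Complex.log (q : ℂ))
    have h2 := h1.cexp
    simp only [mul_zero, Complex.exp_zero, one_mul] at h2
    have h3 : (fun w : ℂ => Complex.exp (Complex.log (q : ℂ) * w)) =
        fun w : ℂ => (q : ℂ) ^ w := by
      funext w
      rw [Complex.cpow_def_of_ne_zero hc0]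
    rw [h3] at h2
    have h4 := h2.const_sub 1
    rw [hlogc] at h4
    exact h4
  have hH : Tendsto (fun w : ℂ => w / (1 - (q : ℂ) ^ w)) (𝓝[≠] 0)
      (𝓝 (-(Real.log q : ℂ))⁻¹) := by
    rw [hasDerivAt_iff_tendsto_slope] at hd
    have h5 := hd.inv₀ (neg_ne_zero.2 hlog)
    refine h5.congr' ?_
    filter_upwards [self_mem_nhdsWithin] with w hw
    have hw0 : w ≠ 0 := hw
    rw [slope_def_field]
    simp only [Complex.cpow_zero, sub_self, sub_zero]
    exact inv_div _ _
  -- map s ↦ s + m into punctured neighborhood of 0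
  have hmap : Tendsto (fun s : ℂ => s + m) (𝓝[≠] (-(m : ℂ))) (𝓝[≠] 0) := by
    refine tendsto_nhdsWithin_of_tendsto_nhds_of_eventually_within _ ?_ ?_
    · have : Tendsto (fun s : ℂ => s + m) (𝓝 (-(m : ℂ))) (𝓝 (-(m : ℂ) + m)) :=
        (continuous_id.add continuous_const).continuousAt
      simpa using this.mono_left nhdsWithin_le_nhds
    · filter_upwards [self_mem_nhdsWithin] with s hs
      have : s ≠ -(m : ℂ) := hs
      simp only [Set.mem_compl_iff, Set.mem_singleton_iff]
      intro h
      exact this (by linear_combination h)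
  have hH2 : Tendsto (fun s : ℂ => (s + m) / (1 - (q : ℂ) ^ (s + (m : ℂ))))
      (𝓝[≠] (-(m : ℂ))) (𝓝 (-(Real.log q : ℂ))⁻¹) := hH.comp hmap
  -- continuous factor
  have hA : ContinuousAt (fun s : ℂ => (q : ℂ) ^ (s + (m : ℂ))) (-(m : ℂ)) :=
    (continuousAt_const_cpow hc0).comp (by fun_prop)
  have hG : Tendsto (fun s : ℂ => (ascPochhammer ℂ m).eval s * (q : ℂ) ^ (s + (m : ℂ)) /
      ((m + 1).factorial : ℂ)) (𝓝[≠] (-(m : ℂ)))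
      (𝓝 ((ascPochhammer ℂ m).eval (-(m : ℂ)) * (q : ℂ) ^ (-(m : ℂ) + (m : ℂ)) /
        ((m + 1).factorial : ℂ))) := by
    exact ((((Polynomial.continuous _).continuousAt).mul hA).div_const _).tendsto.mono_left
      nhdsWithin_le_nhds
  have hcomb := hG.mul hH2
  refine hcomb.congr' ?_ |>.mono_right (le_of_eq ?_)
  · filter_upwards [] with s
    have hexp : s + ((m : ℕ) + 1 : ℂ) - 1 = s + m := by ring
    have hexp2 : s + (((m + 1 : ℕ)) : ℂ) - 1 = s + m := by push_cast; ring
    rw [term, ascPochhammer_succ_eval, hexp2]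
    ring
  · rw [poch_neg, Nat.choose_self, neg_add_cancel, Complex.cpow_zero]
    have hfac : ((m + 1).factorial : ℂ) = ((m : ℂ) + 1) * (m.factorial : ℂ) := by
      rw [Nat.factorial_succ]; push_cast; ring
    have hmfac : (m.factorial : ℂ) ≠ 0 := by exact_mod_cast m.factorial_ne_zero
    have hm1 : ((m : ℂ) + 1) ≠ 0 := by
      intro h
      have : ((m : ℂ) + 1) = ((m + 1 : ℕ) : ℂ) := by push_cast; ring
      rw [this] at h
      exact (Nat.cast_ne_zero (R := ℂ)).2 (Nat.succ_ne_zero m) h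
    rw [hfac]
    field_simp
    ring




lemma summable_term {q : ℝ} (hq0 : 0 < q) (hq1 : q < 1) (m : ℕ) (s : ℂ)
    (hs : ‖s + m‖ ≤ 1/2) : Summable (term q s) := by
  refine (summable_nat_add_iff (m + 2)).1 ?_
  refine Summable.of_norm_bounded ((summable_nat_add_iff (m + 2)).2 (summable_bnd hq0 hq1 m))
    fun j => ?_
  exact term_norm_le hq0 hq1 m (j + (m + 2)) (by omega) s hs


end StmtAux4


/-- The meromorphic continuation of the `q`-zeta function:
`ζ_q(s) = (1-q)^s ∑_{r≥0} C(s+r-1,r) q^{s+r-1}/(1-q^{s+r-1})`,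
where `C(s+r-1,r) = (s)_r / r!` (rising factorial). -/
noncomputable def zetaQc (q : ℝ) (s : ℂ) : ℂ :=
  (1 - (q : ℂ)) ^ s *
    ∑' r : ℕ, ((ascPochhammer ℂ r).eval s / (r.factorial : ℂ)) *
      ((q : ℂ) ^ (s + (r : ℂ) - 1) / (1 - (q : ℂ) ^ (s + (r : ℂ) - 1)))

open StmtAux4

theorem stmt_4 (q : ℝ) (hq0 : 0 < q) (hq1 : q < 1) (m : ℕ) :
    Filter.Tendsto (fun s : ℂ => zetaQc q s) (nhdsWithin (-(m : ℂ)) {(-(m : ℂ))}ᶜ)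
      (nhds ((1 - (q : ℂ)) ^ (-(m : ℤ)) *
        (∑ r ∈ Finset.range (m + 1),
            (-1 : ℂ) ^ r * (m.choose r : ℂ) / ((q : ℂ) ^ (m + 1 - r) - 1)
          + (-1 : ℂ) ^ (m + 1) / (((m : ℂ) + 1) * (Real.log q : ℂ))))) := by
  have hzeta : ∀ s : ℂ, zetaQc q s = (1 - (q : ℂ)) ^ s * ∑' r : ℕ, term q s r := fun s => rfl
  simp only [hzeta]
  set L : ℕ → ℂ := fun r => if r = m + 1 then (-1 : ℂ) ^ (m + 1) / (((m : ℂ) + 1) * (Real.log q : ℂ))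
    else (-1 : ℂ) ^ r * (m.choose r : ℂ) / ((q : ℂ) ^ (m + 1 - r) - 1) with hL
  -- eventually in the ball
  have hball : ∀ᶠ s : ℂ in 𝓝[≠] (-(m : ℂ)), ‖s + m‖ ≤ 1/2 := by
    have h1 : ∀ᶠ s : ℂ in 𝓝 (-(m : ℂ)), ‖s + m‖ ≤ 1/2 := by
      have h2 := Metric.closedBall_mem_nhds (α := ℂ) (-(m : ℂ)) (by norm_num : (0:ℝ) < 1/2)
      filter_upwards [h2] with s hs
      rw [Metric.mem_closedBall, Complex.dist_eq] at hs
      simpa [sub_neg_eq_add] using hs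
    exact h1.filter_mono nhdsWithin_le_nhds
  -- the finite part
  have hfin : Tendsto (fun s : ℂ => ∑ r ∈ Finset.range (m + 2), term q s r) (𝓝[≠] (-(m : ℂ)))
      (𝓝 (∑ r ∈ Finset.range (m + 2), L r)) := by
    refine tendsto_finset_sum _ fun r hr => ?_
    rcases eq_or_ne r (m + 1) with rfl | hne
    · rw [hL]; simp only [if_pos rfl]
      exact tendsto_term_sing hq0 hq1 m
    · have hrle : r ≤ m := by
        simp only [Finset.mem_range] at hr; omega
      have h1 := ((term_contAt hq0 hq1 m r hne).tendsto).mono_left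
        (nhdsWithin_le_nhds (s := {(-(m : ℂ))}ᶜ))
      rw [term_at_le hq0 hq1 hrle] at h1
      rw [hL]; simp only [if_neg hne]
      exact h1
  -- the tail
  have htail : Tendsto (fun s : ℂ => ∑' j : ℕ, term q s (j + (m + 2))) (𝓝[≠] (-(m : ℂ)))
      (𝓝 0) := by
    have h0 : Tendsto (fun s : ℂ => ∑' j : ℕ, term q s (j + (m + 2))) (𝓝[≠] (-(m : ℂ)))
        (𝓝 (∑' _ : ℕ, (0 : ℂ))) := by
      refine tendsto_tsum_of_dominated_convergence
        ((summable_nat_add_iff (m + 2)).2 (summable_bnd hq0 hq1 m)) (fun j => ?_) ?_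
      · have hne : j + (m + 2) ≠ m + 1 := by omega
        have h1 := ((term_contAt hq0 hq1 m (j + (m + 2)) hne).tendsto).mono_left
          (nhdsWithin_le_nhds (s := {(-(m : ℂ))}ᶜ))
        rwa [term_at_gt (by omega)] at h1
      · filter_upwards [hball] with s hs j
        exact term_norm_le hq0 hq1 m (j + (m + 2)) (by omega) s hs
    simpa using h0
  have hsum : Tendsto (fun s : ℂ => ∑' r : ℕ, term q s r) (𝓝[≠] (-(m : ℂ)))
      (𝓝 (∑ r ∈ Finset.range (m + 2), L r)) := by
    have h1 := hfin.add htail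
    rw [add_zero] at h1
    refine h1.congr' ?_
    filter_upwards [hball] with s hs
    exact Summable.sum_add_tsum_nat_add (m + 2) (summable_term hq0 hq1 m s hs)
  -- the power part
  have h1c : 1 - (q : ℂ) ≠ 0 := by
    rw [sub_ne_zero]
    intro h
    have : q = 1 := by exact_mod_cast h.symm
    linarith
  have hpow : Tendsto (fun s : ℂ => (1 - (q : ℂ)) ^ s) (𝓝[≠] (-(m : ℂ)))
      (𝓝 ((1 - (q : ℂ)) ^ (-(m : ℤ)))) := by
    have h1 := (continuousAt_const_cpow (b := -(m : ℂ)) h1c).tendsto.mono_left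
      (nhdsWithin_le_nhds (s := {(-(m : ℂ))}ᶜ))
    have h2 : (1 - (q : ℂ)) ^ (-(m : ℂ)) = (1 - (q : ℂ)) ^ (-(m : ℤ)) := by
      rw [← Complex.cpow_intCast]
      norm_num
    rwa [h2] at h1
  have hfinal := hpow.mul hsum
  have hLsum : ∑ r ∈ Finset.range (m + 2), L r =
      ∑ r ∈ Finset.range (m + 1), (-1 : ℂ) ^ r * (m.choose r : ℂ) / ((q : ℂ) ^ (m + 1 - r) - 1)
        + (-1 : ℂ) ^ (m + 1) / (((m : ℂ) + 1) * (Real.log q : ℂ)) := by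
    rw [Finset.sum_range_succ]
    congr 1
    · refine Finset.sum_congr rfl fun r hr => ?_
      simp only [Finset.mem_range] at hr
      rw [hL]; simp only [if_neg (by omega : r ≠ m + 1)]
    · simp [hL]
  rwa [hLsum] at hfinal
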